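/- Let κ : [r₀, r₁] → ℝ be continuously differentiable, strictly decreasing, and strictly convex; let g : [r₀, r₁] → ℝ be continuous, decreasing, and convex, with g(r₀) < κ(r₀). Define H(r) = κ(r) − g(r₀) − κ'(r)(r − r₀) and r* = sup{ r ∈ [r₀, r₁] : H(r) > 0 }. Then: (1) if g(r*) < κ(r*), then g(r) < κ(r) for all r ∈ [r₀, r*]; (2) if g(r*) > κ(r*), then g(r) = κ(r) has exactly one solution in (r₀, r*); (3) if g(r*) = κ(r*), then r* is the only solution of g(r) = κ(r) in [r₀, r*]. -/

import Mathlib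

open Set Filter Topology

/-- Step 1 of Algorithm 1 (Proposition on tangent-line bisection for the CQLR
inversion): with κ C¹, strictly decreasing, strictly convex; g continuous,
decreasing, convex; g(r₀) < κ(r₀); H(r) = κ(r) − g(r₀) − κ'(r)(r − r₀) and
r* = sup { r ∈ [r₀,r₁] : H(r) > 0 }, the three cases on the sign of
g(r*) − κ(r*) classify the intersections of g and κ on [r₀, r*]. -/
theorem stmt2 (r₀ r₁ : ℝ) (hr : r₀ < r₁) (κ g : ℝ → ℝ)
    (hκC1 : ContDiffOn ℝ 1 κ (Set.Icc r₀ r₁))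
    (hκmono : StrictAntiOn κ (Set.Icc r₀ r₁))
    (hκconv : StrictConvexOn ℝ (Set.Icc r₀ r₁) κ)
    (hgcont : ContinuousOn g (Set.Icc r₀ r₁))
    (hgmono : AntitoneOn g (Set.Icc r₀ r₁))
    (hgconv : ConvexOn ℝ (Set.Icc r₀ r₁) g)
    (h0 : g r₀ < κ r₀)
    (H : ℝ → ℝ)
    (hH : ∀ r, H r = κ r - g r₀ - deriv κ r * (r - r₀))
    (rstar : ℝ)
    (hrstar : rstar = sSup {r | r ∈ Set.Icc r₀ r₁ ∧ H r > 0}) :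
    (g rstar < κ rstar → ∀ r ∈ Set.Icc r₀ rstar, g r < κ r) ∧
    (g rstar > κ rstar → ∃! x, x ∈ Set.Ioo r₀ rstar ∧ g x = κ x) ∧
    (g rstar = κ rstar →
      ∀ r ∈ Set.Icc r₀ rstar, (g r = κ r ↔ r = rstar)) := by
  set K := Set.Icc r₀ r₁ with hKdef
  have hr0K : r₀ ∈ K := ⟨le_refl _, hr.le⟩
  have hr1K : r₁ ∈ K := ⟨hr.le, le_refl _⟩
  have hud : UniqueDiffOn ℝ K := uniqueDiffOn_Icc hr
  have hκd : DifferentiableOn ℝ κ K := hκC1.differentiableOn one_ne_zero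
  set D := fun r => derivWithin κ K r with hDdef
  have hDcont : ContinuousOn D K := hκC1.continuousOn_derivWithin hud le_rfl
  set H' := fun r => κ r - g r₀ - D r * (r - r₀) with hH'def
  have hH'cont : ContinuousOn H' K :=
    (hκC1.continuousOn.sub continuousOn_const).sub
      (hDcont.mul (continuousOn_id.sub continuousOn_const))
  have hDmono : MonotoneOn D K := hκconv.convexOn.monotoneOn_derivWithin hκd
  -- H' is antitone on K
  have hH'anti : ∀ x ∈ K, ∀ y ∈ K, x ≤ y → H' y ≤ H' x := by
    intro x hx y hy hxy
    rcases eq_or_lt_of_le hxy with rfl | hxy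
    · exact le_refl _
    have h1 : slope κ x y ≤ D y :=
      hκconv.convexOn.slope_le_derivWithin hx hy hxy (hκd y hy)
    have h2 : D x ≤ D y := hDmono hx hy hxy.le
    have hyx : (0:ℝ) < y - x := by linarith
    rw [slope_def_field, div_le_iff₀ hyx] at h1
    have hxr : (0:ℝ) ≤ x - r₀ := by linarith [hx.1]
    simp only [hH'def]
    nlinarith [mul_nonneg (sub_nonneg.mpr h2) hxr]
  -- the set S
  set S := {r | r ∈ K ∧ H r > 0} with hSdef
  have hr₀S : r₀ ∈ S := by
    refine ⟨hr0K, ?_⟩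
    have hval : H r₀ = κ r₀ - g r₀ := by rw [hH]; ring
    rw [hval]; linarith
  have hSbdd : BddAbove S := ⟨r₁, fun x hx => hx.1.2⟩
  have hSne : S.Nonempty := ⟨r₀, hr₀S⟩
  have h0star : r₀ ≤ rstar := hrstar ▸ le_csSup hSbdd hr₀S
  have hstar1 : rstar ≤ r₁ := hrstar ▸ csSup_le hSne (fun x hx => hx.1.2)
  have hstarK : rstar ∈ K := ⟨h0star, hstar1⟩
  have hDeq : ∀ x, r₀ < x → x < r₁ → D x = deriv κ x := fun x h1 h2 =>
    derivWithin_of_mem_nhds (Icc_mem_nhds h1 h2)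
  by_cases hcase : g r₀ < κ r₁
  · -- trivial case: g < κ everywhere on K
    have key : ∀ r ∈ K, g r < κ r := by
      intro r hrK
      have h1 : g r ≤ g r₀ := hgmono hr0K hrK hrK.1
      have h2 : κ r₁ ≤ κ r := by
        rcases eq_or_lt_of_le hrK.2 with heq | hlt
        · rw [heq]
        · exact (hκmono hrK hr1K hlt).le
      linarith
    have hsub : Set.Icc r₀ rstar ⊆ K := Icc_subset_Icc le_rfl hstar1
    refine ⟨fun _ r hrI => key r (hsub hrI), fun hgt => ?_, fun heq => ?_⟩
    · exact absurd (key rstar hstarK) (by linarith)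
    · exact absurd (key rstar hstarK) (by linarith)
  push_neg at hcase
  -- members of S have H' positive
  have hSpos : ∀ x ∈ S, 0 < H' x := by
    rintro x ⟨hxK, hxH⟩
    rcases eq_or_lt_of_le hxK.1 with heq | hlt
    · simp only [hH'def, ← heq]
      have hval : κ r₀ - g r₀ - D r₀ * (r₀ - r₀) = κ r₀ - g r₀ := by ring
      rw [hval]; linarith
    rcases eq_or_lt_of_le hxK.2 with heq | hlt2
    · by_cases hdiff : DifferentiableAt ℝ κ x
      · have hEq : D x = deriv κ x := hdiff.derivWithin (hud x hxK)
        rw [hH] at hxH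
        simp only [hH'def, hEq]
        linarith
      · rw [hH, deriv_zero_of_not_differentiableAt hdiff] at hxH
        rw [heq] at hxH
        simp at hxH
        linarith
    · have hEq := hDeq x hlt hlt2
      rw [hH] at hxH
      simp only [hH'def, hEq]
      linarith
  have hH'pos : ∀ y, r₀ ≤ y → y < rstar → 0 < H' y := by
    intro y hy1 hy2
    obtain ⟨x, hxS, hyx⟩ := exists_lt_of_lt_csSup hSne (hrstar ▸ hy2)
    exact lt_of_lt_of_le (hSpos x hxS)
      (hH'anti y ⟨hy1, le_trans hyx.le hxS.1.2⟩ x hxS.1 hyx.le)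
  have hH'star : 0 ≤ H' rstar := by
    rcases eq_or_lt_of_le h0star with heq | hlt
    · simp only [hH'def, ← heq]
      have hval : κ r₀ - g r₀ - D r₀ * (r₀ - r₀) = κ r₀ - g r₀ := by ring
      rw [hval]; linarith
    · have hcont : Tendsto H' (𝓝[Set.Ico r₀ rstar] rstar) (𝓝 (H' rstar)) :=
        (hH'cont rstar hstarK).mono_left
          (nhdsWithin_mono _ (fun z hz => ⟨hz.1, hz.2.le.trans hstar1⟩))
      have hne : (𝓝[Set.Ico r₀ rstar] rstar).NeBot := by
        rw [← mem_closure_iff_nhdsWithin_neBot, closure_Ico (ne_of_lt hlt)]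
        exact ⟨h0star, le_refl _⟩
      exact ge_of_tendsto hcont
        (eventually_mem_nhdsWithin.mono fun y hy => (hH'pos y hy.1 hy.2).le)
  have hH'nonneg : ∀ y, r₀ ≤ y → y ≤ rstar → 0 ≤ H' y := by
    intro y h1 h2
    rcases eq_or_lt_of_le h2 with rfl | h2
    · exact hH'star
    · exact (hH'pos y h1 h2).le
  -- Lemma A: no two "g above κ" points
  have lemA : ∀ x y, r₀ < x → x < y → y ≤ rstar →
      κ x - g x ≤ κ y - g y → κ y ≤ g y → False := by
    intro x y hx hxy hyr hfxy hgy
    have hyK : y ∈ K := ⟨by linarith, le_trans hyr hstar1⟩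
    have hxK : x ∈ K := ⟨hx.le, by linarith [hyK.2]⟩
    have c1 : slope κ x y < D y := hκconv.slope_lt_derivWithin hxK hyK hxy (hκd y hyK)
    rw [slope_def_field] at c1
    have hyx : (0:ℝ) < y - x := by linarith
    have hyr₀ : (0:ℝ) < y - r₀ := by linarith
    have h2 : (g r₀ - g y) / (r₀ - y) ≤ (g x - g y) / (x - y) :=
      hgconv.secant_mono hyK hr0K hxK (by linarith : r₀ ≠ y) (ne_of_lt hxy) hx.le
    have e1 : (g r₀ - g y) / (r₀ - y) = (g y - g r₀) / (y - r₀) := by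
      rw [show r₀ - y = -(y - r₀) by ring, show g r₀ - g y = -(g y - g r₀) by ring,
        neg_div_neg_eq]
    have e2 : (g x - g y) / (x - y) = (g y - g x) / (y - x) := by
      rw [show x - y = -(y - x) by ring, show g x - g y = -(g y - g x) by ring,
        neg_div_neg_eq]
    rw [e1, e2] at h2
    have c3 : (g y - g x) / (y - x) ≤ (κ y - κ x) / (y - x) := by
      rw [div_le_div_iff₀ hyx hyx]
      nlinarith [mul_le_mul_of_nonneg_right (show g y - g x ≤ κ y - κ x by linarith) hyx.le]
    have hH'y : 0 ≤ H' y := hH'nonneg y (by linarith) hyr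
    have c4 : D y ≤ (κ y - g r₀) / (y - r₀) := by
      rw [le_div_iff₀ hyr₀]
      simp only [hH'def] at hH'y
      linarith
    have c5 : (κ y - g r₀) / (y - r₀) ≤ (g y - g r₀) / (y - r₀) := by
      rw [div_le_div_iff₀ hyr₀ hyr₀]
      nlinarith [mul_le_mul_of_nonneg_right (show κ y - g r₀ ≤ g y - g r₀ by linarith) hyr₀.le]
    linarith
  have h0s_of : ∀ {c : Prop}, ¬ (g r₀ < κ r₀) → c := fun h => absurd h0 h
  refine ⟨?_, ?_, ?_⟩
  · -- Case 1
    intro hlt r hrI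
    by_contra hge
    push_neg at hge
    have hr0r : r₀ < r := lt_of_le_of_ne hrI.1 (by rintro rfl; linarith)
    have hrrs : r < rstar := lt_of_le_of_ne hrI.2 (by rintro rfl; linarith)
    have hsubK : Set.Icc r rstar ⊆ K := Icc_subset_Icc hr0r.le hstar1
    set T := {z | z ∈ Set.Icc r rstar ∧ κ z ≤ g z} with hTdef
    have hTclosed : IsClosed T := by
      have : T = Set.Icc r rstar ∩ (fun z => κ z - g z) ⁻¹' Set.Iic 0 := by
        ext z
        simp [hTdef, sub_nonpos]
      rw [this]
      exact ContinuousOn.preimage_isClosed_of_isClosed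
        ((hκC1.continuousOn.sub hgcont).mono hsubK) isClosed_Icc isClosed_Iic
    have hTcomp : IsCompact T :=
      IsCompact.of_isClosed_subset isCompact_Icc hTclosed (fun z hz => hz.1)
    have hTne : T.Nonempty := ⟨r, ⟨⟨le_refl _, hrrs.le⟩, hge⟩⟩
    set y := sSup T with hydef
    have hyT : y ∈ T := hTcomp.sSup_mem hTne
    have hyub : ∀ z ∈ T, z ≤ y := fun z hz => le_csSup hTcomp.bddAbove hz
    have hyrs : y < rstar := lt_of_le_of_ne hyT.1.2 (by rintro h; rw [h] at hyT; linarith [hyT.2])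
    have hry : r ≤ y := hyT.1.1
    have hy0 : r₀ < y := lt_of_lt_of_le hr0r hry
    -- g y = κ y
    have hgy : g y = κ y := by
      by_contra hne
      have hlt' : κ y < g y := lt_of_le_of_ne hyT.2 (fun h => hne h.symm)
      have hφ : ContinuousOn (fun t => g t - κ t) (Set.Icc y rstar) :=
        (hgcont.sub hκC1.continuousOn).mono
          (Icc_subset_Icc hy0.le hstar1)
      have h0mem : (0:ℝ) ∈ Set.Ioo ((fun t => g t - κ t) rstar) ((fun t => g t - κ t) y) := by
        constructor <;> simp <;> linarith
      obtain ⟨z, hzI, hz0⟩ := intermediate_value_Ioo' hyrs.le hφ h0mem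
      have hzT : z ∈ T := ⟨⟨le_trans hry hzI.1.le, hzI.2.le⟩, by simp at hz0; linarith⟩
      exact absurd (hyub z hzT) (not_le.mpr hzI.1)
    -- to the right of y, g < κ
    have hright : ∀ z, y < z → z ≤ rstar → g z < κ z := by
      intro z h1 h2
      by_contra hge'
      push_neg at hge'
      exact absurd (hyub z ⟨⟨le_trans hry h1.le, h2⟩, hge'⟩) (not_le.mpr h1)
    -- derivative of κ at y
    have hyK : y ∈ K := ⟨hy0.le, le_trans hyrs.le hstar1⟩
    have hyIoo : r₀ < y ∧ y < r₁ := ⟨hy0, lt_of_lt_of_le hyrs hstar1⟩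
    have hdiffy : DifferentiableAt ℝ κ y :=
      (hκd y hyK).differentiableAt (Icc_mem_nhds hyIoo.1 hyIoo.2)
    have hDy : D y = deriv κ y := hDeq y hyIoo.1 hyIoo.2
    have hyr₀ : (0:ℝ) < y - r₀ := by linarith
    set c := (g y - g r₀) / (y - r₀) with hcdef
    have hcD : D y < c := by
      have hp := hH'pos y hy0.le hyrs
      simp only [hH'def] at hp
      rw [hcdef, lt_div_iff₀ hyr₀]
      rw [hgy]
      linarith
    have hslope : ∀ z ∈ Set.Ioc y rstar, c ≤ slope κ y z := by
      intro z hz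
      have hgz := hright z hz.1 hz.2
      have hzK : z ∈ K := ⟨by linarith [hz.1], le_trans hz.2 hstar1⟩
      have hzy : (0:ℝ) < z - y := by linarith [hz.1]
      have hadj : (g y - g r₀) / (y - r₀) ≤ (g z - g y) / (z - y) :=
        hgconv.slope_mono_adjacent hr0K hzK hy0 hz.1
      have hstep : (g z - g y) / (z - y) ≤ (κ z - κ y) / (z - y) := by
        rw [div_le_div_iff₀ hzy hzy]
        nlinarith [mul_le_mul_of_nonneg_right
          (show g z - g y ≤ κ z - κ y by rw [hgy]; linarith) hzy.le]
      rw [slope_def_field]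
      calc c ≤ (g z - g y) / (z - y) := hadj
        _ ≤ (κ z - κ y) / (z - y) := hstep
    have ht : Tendsto (slope κ y) (𝓝[>] y) (𝓝 (deriv κ y)) :=
      (hasDerivAt_iff_tendsto_slope.mp hdiffy.hasDerivAt).mono_left
        (nhdsWithin_mono _ (fun z hz => ne_of_gt hz))
    have hmem : Set.Ioc y rstar ∈ 𝓝[>] y := Ioc_mem_nhdsGT_of_mem ⟨le_refl _, hyrs⟩
    have : c ≤ deriv κ y :=
      ge_of_tendsto ht (eventually_of_mem hmem hslope)
    rw [← hDy] at this
    linarith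
  · -- Case 2
    intro hgt
    have h0s : r₀ < rstar := by
      rcases eq_or_lt_of_le h0star with heq | h
      · rw [← heq] at hgt; linarith
      · exact h
    have hφ : ContinuousOn (fun t => g t - κ t) (Set.Icc r₀ rstar) :=
      (hgcont.sub hκC1.continuousOn).mono (Icc_subset_Icc le_rfl hstar1)
    have h0mem : (0:ℝ) ∈ Set.Ioo ((fun t => g t - κ t) r₀) ((fun t => g t - κ t) rstar) := by
      constructor <;> simp <;> linarith
    obtain ⟨x, hxI, hx0⟩ := intermediate_value_Ioo h0s.le hφ h0mem
    simp only at hx0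
    have hgx : g x = κ x := by linarith [sub_eq_zero.mp hx0]
    refine ⟨x, ⟨hxI, hgx⟩, ?_⟩
    rintro z ⟨hzI, hgz⟩
    rcases lt_trichotomy z x with h | h | h
    · exact absurd (lemA z x hzI.1 h hxI.2.le (by linarith) (by linarith)) (fun h => h)
    · exact h
    · exact absurd (lemA x z hxI.1 h hzI.2.le (by linarith) (by linarith)) (fun h => h)
  · -- Case 3
    intro heq r hrI
    have h0s : r₀ < rstar := by
      rcases eq_or_lt_of_le h0star with heq' | h
      · rw [← heq'] at heq; linarith
      · exact h
    constructor
    · intro hgr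
      by_contra hne
      have hrs : r < rstar := lt_of_le_of_ne hrI.2 hne
      have hr0r : r₀ < r := lt_of_le_of_ne hrI.1 (by rintro rfl; linarith)
      exact lemA r rstar hr0r hrs (le_refl _) (by linarith) (by linarith)
    · rintro rfl
      exact heq
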